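/- Let X be a locally compact, separable, metrizable space and Y a Polish space. The Borel σ-algebra of C(X,Y) with the compact-open topology equals the trace on C(X,Y) of the product σ-algebra on Y^X, i.e., the σ-algebra generated by the point-evaluation maps π_x(f) = f(x). -/

import Mathlib

open TopologicalSpace MeasureTheory Set Metric

/-- For `X` locally compact, separable, metrizable and `Y` Polish, the Borel σ-algebra of
`C(X, Y)` with the compact-open topology equals the σ-algebra generated by the point-evaluation
maps `f ↦ f x`, i.e. the trace of the product σ-algebra on `Y ^ X`. -/
theorem borel_continuousMap_eq_comap_eval (X Y : Type*)
    [TopologicalSpace X] [LocallyCompactSpace X] [SeparableSpace X] [MetrizableSpace X]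
    [TopologicalSpace Y] [PolishSpace Y] [MeasurableSpace Y] [BorelSpace Y] :
    borel C(X, Y) = ⨆ x : X, MeasurableSpace.comap (fun f : C(X, Y) => f x) inferInstance := by
  letI : MetricSpace X := TopologicalSpace.metrizableSpaceMetric X
  haveI : SecondCountableTopology X := UniformSpace.secondCountable_of_separable X
  letI := upgradeIsCompletelyMetrizable Y
  set M := ⨆ x : X, MeasurableSpace.comap (fun f : C(X, Y) => f x) ‹MeasurableSpace Y› with hM
  have hev : ∀ x : X, @Measurable _ _ M _ (fun f : C(X, Y) => f x) := fun x =>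
    measurable_iff_comap_le.2 (le_iSup (fun x : X =>
      MeasurableSpace.comap (fun f : C(X, Y) => f x) ‹MeasurableSpace Y›) x)
  apply le_antisymm
  · -- `borel ≤ M` : use the subbasis of the compact-open topology
    rw [borel_eq_generateFrom_of_subbasis ContinuousMap.compactOpen_eq]
    refine MeasurableSpace.generateFrom_le ?_
    rintro s ⟨K, hK, U, hU, rfl⟩
    simp only [mem_setOf_eq] at hK hU
    show MeasurableSet[M] {f : C(X, Y) | Set.MapsTo f K U}
    by_cases hUc : Uᶜ = ∅
    · have : {f : C(X, Y) | Set.MapsTo f K U} = univ := by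
        have hU' : U = univ := by simpa [compl_empty_iff] using hUc
        simp [hU', Set.mapsTo_univ]
      rw [this]; exact MeasurableSet.univ
    · have hUc' : Set.Nonempty Uᶜ := nonempty_iff_ne_empty.2 hUc
      -- choose a countable dense subset of `K`
      obtain ⟨D, Dcount, Ddense⟩ := TopologicalSpace.exists_countable_dense (K : Set X).Elem
      set c : Set X := Subtype.val '' D with hc
      have hcK : c ⊆ K := by rintro x ⟨y, -, rfl⟩; exact y.2
      have hKc : K ⊆ closure c := fun x hx => by
        have h1 : (⟨x, hx⟩ : K.Elem) ∈ closure D := Ddense _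
        rw [Topology.IsInducing.subtypeVal.closure_eq_preimage_closure_image] at h1
        exact h1
      have key : {f : C(X, Y) | Set.MapsTo f K U} =
          ⋃ n : ℕ, ⋂ x ∈ c,
            (fun f : C(X, Y) => f x) ⁻¹' {y | 1 / (n + 1 : ℝ) ≤ infDist y Uᶜ} := by
        ext f
        simp only [mem_setOf_eq, mem_iUnion, mem_iInter, mem_preimage]
        constructor
        · intro hf
          rcases K.eq_empty_or_nonempty with hKe | hKne
          · exact ⟨0, fun x hx => absurd (hcK hx) (by simp [hKe])⟩
          · have hcomp : IsCompact (f '' K) := hK.image f.continuous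
            obtain ⟨y0, hy0, hy0min⟩ := hcomp.exists_isMinOn (hKne.image f)
              (continuous_infDist_pt Uᶜ).continuousOn
            have hpos : 0 < infDist y0 Uᶜ := by
              refine (hU.isClosed_compl.notMem_iff_infDist_pos hUc').1 ?_
              obtain ⟨x0, hx0, rfl⟩ := hy0
              exact notMem_compl_iff.2 (hf hx0)
            obtain ⟨n, hn⟩ := exists_nat_one_div_lt hpos
            refine ⟨n, fun x hx => ?_⟩
            exact le_trans hn.le ((isMinOn_iff.1 hy0min) _ (mem_image_of_mem f (hcK hx)))
        · rintro ⟨n, hn⟩ x hx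
          have hcl : IsClosed {x : X | 1 / (n + 1 : ℝ) ≤ infDist (f x) Uᶜ} :=
            isClosed_le continuous_const ((continuous_infDist_pt Uᶜ).comp f.continuous)
          have hsub : closure c ⊆ {x : X | 1 / (n + 1 : ℝ) ≤ infDist (f x) Uᶜ} :=
            closure_minimal (fun z hz => hn z hz) hcl
          have hge := hsub (hKc hx)
          have hpos : 0 < infDist (f x) Uᶜ := lt_of_lt_of_le (by positivity) hge
          exact notMem_compl_iff.1 ((hU.isClosed_compl.notMem_iff_infDist_pos hUc').2 hpos)
      rw [key]
      refine MeasurableSet.iUnion fun n => ?_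
      refine MeasurableSet.biInter (Dcount.image _) fun x hx => ?_
      exact hev x ((isClosed_le continuous_const (continuous_infDist_pt Uᶜ)).measurableSet)
  · -- `M ≤ borel` : each evaluation is continuous hence Borel measurable
    letI : MeasurableSpace C(X, Y) := borel C(X, Y)
    haveI : BorelSpace C(X, Y) := ⟨rfl⟩
    refine iSup_le fun x => measurable_iff_comap_le.1 ?_
    exact (continuous_eval_const x).measurable
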